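/- Privacy amplification by subsampling (simplified ε-DP version): if mechanism A is ε-DP, then the mechanism that first subsamples each record independently (or samples a random subset of size m from n, with q = m/n) and then applies A is ε'-DP with ε' = log(1 + q(e^ε − 1)); in particular ε' ≤ q·ε·e^ε, and for small ε, ε' ≈ q·ε. -/

import Mathlib

noncomputable def subsampled {ι X : Type*} [DecidableEq ι]
    (A : Finset ι → X → ℝ) (m : ℕ) (S : Finset ι) (x : X) : ℝ :=
  (∑ T ∈ S.powersetCard m, A T x) / (S.card.choose m : ℝ)

lemma key_alg (C Va Vb t q : ℝ) (hC : 0 ≤ C) (hVb : 0 ≤ Vb)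
    (ht : 1 ≤ t) (hq0 : 0 ≤ q) (hq1 : q ≤ 1)
    (h1 : Va ≤ t * Vb) (h2 : (1 - q) * Va ≤ t * q * C) :
    C + Va ≤ (1 + q * (t - 1)) * (C + Vb) := by
  have ht0 : (0:ℝ) < t := by linarith
  rw [← mul_le_mul_iff_right₀ ht0]
  nlinarith [mul_le_mul_of_nonneg_left h1 (by nlinarith : (0:ℝ) ≤ 1 + q*(t-1)),
             mul_le_mul_of_nonneg_left h2 (by linarith : (0:ℝ) ≤ t - 1)]

lemma double_count {ι : Type*} [DecidableEq ι] (S₀ : Finset ι) (k : ℕ) (g : Finset ι → ℝ) :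
    ∑ U ∈ S₀.powersetCard k, ∑ c ∈ S₀ \ U, g (insert c U)
      = (k + 1 : ℝ) * ∑ T ∈ S₀.powersetCard (k+1), g T := by
  rw [Finset.sum_sigma', Finset.mul_sum]
  have hcongr : ∀ T ∈ S₀.powersetCard (k+1), (k+1:ℝ) * g T = ∑ _c ∈ T, g T := by
    intro T hT
    rw [Finset.sum_const, (Finset.mem_powersetCard.mp hT).2]
    push_cast; ring
  rw [Finset.sum_congr rfl hcongr, Finset.sum_sigma']
  refine Finset.sum_nbij' (i := fun p => ⟨insert p.2 p.1, p.2⟩)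
    (j := fun p => ⟨p.1.erase p.2, p.2⟩) ?_ ?_ ?_ ?_ ?_
  · rintro ⟨U, c⟩ hp
    simp only [Finset.mem_sigma, Finset.mem_powersetCard, Finset.mem_sdiff] at hp ⊢
    obtain ⟨⟨hU, hUc⟩, hc, hcU⟩ := hp
    exact ⟨⟨Finset.insert_subset hc hU, by rw [Finset.card_insert_of_notMem hcU, hUc]⟩,
      Finset.mem_insert_self _ _⟩
  · rintro ⟨T, c⟩ hp
    simp only [Finset.mem_sigma, Finset.mem_powersetCard, Finset.mem_sdiff] at hp ⊢
    obtain ⟨⟨hT, hTc⟩, hc⟩ := hp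
    refine ⟨⟨(Finset.erase_subset _ _).trans hT,
      by rw [Finset.card_erase_of_mem hc, hTc]; omega⟩, hT hc, Finset.notMem_erase _ _⟩
  · rintro ⟨U, c⟩ hp
    simp only [Finset.mem_sigma, Finset.mem_sdiff] at hp
    simp [Finset.erase_insert hp.2.2]
  · rintro ⟨T, c⟩ hp
    simp only [Finset.mem_sigma] at hp
    simp [Finset.insert_erase hp.2]
  · rintro ⟨U, c⟩ _
    rfl

theorem privacy_amplification_by_subsampling {ι X : Type*} [DecidableEq ι]
    [Fintype X] (A : Finset ι → X → ℝ) (ε : ℝ) (hε : 0 ≤ ε)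
    (m n : ℕ) (hn : 0 < n) (hmn : m ≤ n)
    (hA0 : ∀ T x, 0 ≤ A T x) (hA1 : ∀ T, ∑ x, A T x = 1)
    (hDP : ∀ T T' : Finset ι, T.card = m → T'.card = m → (T \ T').card ≤ 1 →
      ∀ E : Finset X, ∑ x ∈ E, A T x ≤ Real.exp ε * ∑ x ∈ E, A T' x) :
    (∀ S S' : Finset ι, S.card = n → S'.card = n → (S \ S').card ≤ 1 →
      ∀ E : Finset X,
        ∑ x ∈ E, subsampled A m S x ≤
          Real.exp (Real.log (1 + (m / n : ℝ) * (Real.exp ε - 1)))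
            * ∑ x ∈ E, subsampled A m S' x) ∧
    Real.log (1 + (m / n : ℝ) * (Real.exp ε - 1)) ≤
      (m / n : ℝ) * ε * Real.exp ε := by
  have ht1 : (1:ℝ) ≤ Real.exp ε := Real.one_le_exp hε
  have hn0 : (0:ℝ) < (n:ℝ) := by exact_mod_cast hn
  have hq0 : (0:ℝ) ≤ (m / n : ℝ) := by positivity
  have hq1 : (m / n : ℝ) ≤ 1 := by
    rw [div_le_one hn0]; exact_mod_cast hmn
  have hfac : (0:ℝ) < 1 + (m / n : ℝ) * (Real.exp ε - 1) := by nlinarith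
  constructor
  · intro S S' hS hS' hdiff E
    rw [Real.exp_log hfac]
    have hNpos : (0:ℝ) < (n.choose m : ℝ) := by exact_mod_cast Nat.choose_pos hmn
    have hsub : ∀ (W : Finset ι), W.card = n → ∑ x ∈ E, subsampled A m W x
        = (∑ T ∈ W.powersetCard m, ∑ x ∈ E, A T x) / (n.choose m : ℝ) := by
      intro W hW
      unfold subsampled
      rw [hW, ← Finset.sum_div, Finset.sum_comm]
    rw [hsub S hS, hsub S' hS', ← mul_div_assoc]
    have hf0 : ∀ T : Finset ι, 0 ≤ ∑ x ∈ E, A T x :=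
      fun T => Finset.sum_nonneg fun x _ => hA0 T x
    have hF0 : ∀ W : Finset ι, 0 ≤ ∑ T ∈ W.powersetCard m, ∑ x ∈ E, A T x :=
      fun W => Finset.sum_nonneg fun T _ => hf0 T
    gcongr
    rcases Nat.eq_zero_or_pos (S \ S').card with h0 | hpos
    · -- S = S'
      have hsub' : S ⊆ S' := (Finset.sdiff_eq_empty_iff_subset).mp (Finset.card_eq_zero.mp h0)
      have hSeq : S = S' := Finset.eq_of_subset_of_card_le hsub' (by rw [hS, hS'])
      rw [hSeq]
      nlinarith [hF0 S', mul_nonneg hq0 (by linarith : (0:ℝ) ≤ Real.exp ε - 1)]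
    · -- replacement case
      have hc1 : (S \ S').card = 1 := le_antisymm hdiff hpos
      obtain ⟨a, ha⟩ := Finset.card_eq_one.mp hc1
      have hc1' : (S' \ S).card = 1 := by
        rw [Finset.card_sdiff_comm (by rw [hS', hS])]; exact hc1
      obtain ⟨b, hb⟩ := Finset.card_eq_one.mp hc1'
      set S₀ := S ∩ S' with hS₀def
      have haS : a ∈ S ∧ a ∉ S' := by
        have : a ∈ S \ S' := by rw [ha]; exact Finset.mem_singleton_self a
        exact ⟨(Finset.mem_sdiff.mp this).1, (Finset.mem_sdiff.mp this).2⟩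
      have hbS : b ∈ S' ∧ b ∉ S := by
        have : b ∈ S' \ S := by rw [hb]; exact Finset.mem_singleton_self b
        exact ⟨(Finset.mem_sdiff.mp this).1, (Finset.mem_sdiff.mp this).2⟩
      have haS₀ : a ∉ S₀ := fun h => haS.2 (Finset.mem_inter.mp h).2
      have hbS₀ : b ∉ S₀ := fun h => hbS.2 (Finset.mem_inter.mp h).1
      have hSeq : S = insert a (S₀) := by
        ext x
        simp only [hS₀def, Finset.mem_insert, Finset.mem_inter]
        constructor
        · intro hx
          by_cases hx' : x ∈ S'
          · exact Or.inr ⟨hx, hx'⟩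
          · left
            have : x ∈ S \ S' := Finset.mem_sdiff.mpr ⟨hx, hx'⟩
            rw [ha] at this; exact Finset.mem_singleton.mp this
        · rintro (rfl | ⟨hx, _⟩)
          · exact haS.1
          · exact hx
      have hS'eq : S' = insert b (S₀) := by
        ext x
        simp only [hS₀def, Finset.mem_insert, Finset.mem_inter]
        constructor
        · intro hx
          by_cases hx' : x ∈ S
          · exact Or.inr ⟨hx', hx⟩
          · left
            have : x ∈ S' \ S := Finset.mem_sdiff.mpr ⟨hx, hx'⟩
            rw [hb] at this; exact Finset.mem_singleton.mp this
        · rintro (rfl | ⟨_, hx⟩)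
          · exact hbS.1
          · exact hx
      have hS₀card : (S₀).card + 1 = n := by
        have h := hS
        rw [hSeq, Finset.card_insert_of_notMem haS₀] at h
        exact h
      rcases m with _ | k
      · -- m = 0
        simp only [Finset.powersetCard_zero, Finset.sum_singleton]
        nlinarith [hf0 (∅ : Finset ι),
          mul_nonneg hq0 (by linarith : (0:ℝ) ≤ Real.exp ε - 1)]
      · -- m = k+1
        have hdiffcard : ∀ (u v : ι) (U : Finset ι), u ∉ U →
            (insert u U \ insert v U).card ≤ 1 := by
          intro u v U hu
          have hsubs : insert u U \ insert v U ⊆ {u} := by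
            intro x hx
            rw [Finset.mem_sdiff] at hx
            rcases Finset.mem_insert.mp hx.1 with rfl | hxU
            · exact Finset.mem_singleton_self x
            · exact absurd (Finset.mem_insert_of_mem hxU) hx.2
          calc (insert u U \ insert v U).card ≤ ({u} : Finset ι).card :=
                Finset.card_le_card hsubs
            _ = 1 := Finset.card_singleton u
        have hUcard : ∀ (u : ι) (U : Finset ι), u ∉ S₀ → U ∈ (S₀).powersetCard k →
            (insert u U).card = k + 1 := by
          intro u U hu hU
          obtain ⟨hUsub, hUc⟩ := Finset.mem_powersetCard.mp hU
          rw [Finset.card_insert_of_notMem (fun h => hu (hUsub h)), hUc]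
        have hpows : ∀ (c : ι), c ∉ S₀ →
            Finset.powersetCard (k+1) (insert c (S₀))
              = ((S₀).powersetCard (k+1)) ∪
                (((S₀).powersetCard k).image (insert c)) :=
          fun c hc => Finset.powersetCard_succ_insert hc k
        rw [hSeq, hS'eq, hpows a haS₀, hpows b hbS₀]
        have hdisj : ∀ (c : ι), c ∉ S₀ →
            Disjoint ((S₀).powersetCard (k+1))
              (((S₀).powersetCard k).image (insert c)) := by
          intro c hc
          rw [Finset.disjoint_left]
          intro T hT hT'
          obtain ⟨U, _, rfl⟩ := Finset.mem_image.mp hT'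
          exact hc ((Finset.mem_powersetCard.mp hT).1 (Finset.mem_insert_self c U))
        rw [Finset.sum_union (hdisj a haS₀), Finset.sum_union (hdisj b hbS₀)]
        have himg : ∀ (c : ι), c ∉ S₀ →
            ∑ T ∈ ((S₀).powersetCard k).image (insert c), ∑ x ∈ E, A T x
              = ∑ U ∈ (S₀).powersetCard k, ∑ x ∈ E, A (insert c U) x := by
          intro c hc
          apply Finset.sum_image
          intro U1 h1 U2 h2 heq
          have h1' : c ∉ U1 := fun h => hc ((Finset.mem_powersetCard.mp h1).1 h)
          have h2' : c ∉ U2 := fun h => hc ((Finset.mem_powersetCard.mp h2).1 h)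
          rw [← Finset.erase_insert h1', heq, Finset.erase_insert h2']
        rw [himg a haS₀, himg b hbS₀]
        apply key_alg _ _ _ _ _ (hF0 (S₀))
          (Finset.sum_nonneg fun U _ => hf0 _) ht1 hq0 hq1
        · -- Va ≤ t * Vb
          rw [Finset.mul_sum]
          apply Finset.sum_le_sum
          intro U hU
          exact hDP _ _ (hUcard a U haS₀ hU) (hUcard b U hbS₀ hU)
            (hdiffcard a b U (fun h => haS₀ ((Finset.mem_powersetCard.mp hU).1 h))) E
        · -- (1-q) * Va ≤ t * q * C
          have step1 : ((n - (k+1) : ℕ) : ℝ) *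
              (∑ U ∈ S₀.powersetCard k, ∑ x ∈ E, A (insert a U) x)
              ≤ Real.exp ε * (((k + 1 : ℕ) : ℝ) *
                ∑ T ∈ S₀.powersetCard (k+1), ∑ x ∈ E, A T x) := by
            rw [Finset.mul_sum]
            calc ∑ U ∈ S₀.powersetCard k, ((n - (k+1) : ℕ) : ℝ) * ∑ x ∈ E, A (insert a U) x
                = ∑ U ∈ S₀.powersetCard k, ∑ _c ∈ S₀ \ U, ∑ x ∈ E, A (insert a U) x := by
                  apply Finset.sum_congr rfl
                  intro U hU
                  obtain ⟨hUsub, hUc⟩ := Finset.mem_powersetCard.mp hU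
                  rw [Finset.sum_const, nsmul_eq_mul, Finset.card_sdiff_of_subset hUsub, hUc]
                  congr 2
                  omega
              _ ≤ ∑ U ∈ S₀.powersetCard k, ∑ c ∈ S₀ \ U,
                    Real.exp ε * ∑ x ∈ E, A (insert c U) x := by
                  apply Finset.sum_le_sum; intro U hU
                  apply Finset.sum_le_sum; intro c hc
                  obtain ⟨hUsub, hUc⟩ := Finset.mem_powersetCard.mp hU
                  have hcU : c ∉ U := (Finset.mem_sdiff.mp hc).2
                  have haU : a ∉ U := fun h => haS₀ (hUsub h)
                  exact hDP _ _ (by rw [Finset.card_insert_of_notMem haU, hUc])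
                    (by rw [Finset.card_insert_of_notMem hcU, hUc]) (hdiffcard a c U haU) E
              _ = Real.exp ε * ∑ U ∈ S₀.powersetCard k, ∑ c ∈ S₀ \ U,
                    ∑ x ∈ E, A (insert c U) x := by
                  rw [Finset.mul_sum]
                  exact Finset.sum_congr rfl fun U _ => (Finset.mul_sum _ _ _).symm
              _ = Real.exp ε * (((k + 1 : ℕ) : ℝ) *
                    ∑ T ∈ S₀.powersetCard (k+1), ∑ x ∈ E, A T x) := by
                  rw [double_count S₀ k (fun T => ∑ x ∈ E, A T x)]
                  push_cast
                  ring
          have hcast : ((n - (k+1) : ℕ) : ℝ) = (n:ℝ) - ((k+1 : ℕ) : ℝ) := Nat.cast_sub hmn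
          rw [hcast] at step1
          have h := mul_le_mul_of_nonneg_left step1 (by positivity : (0:ℝ) ≤ ((n:ℝ))⁻¹)
          calc (1 - ((k+1 : ℕ) : ℝ)/(n:ℝ)) *
                (∑ U ∈ S₀.powersetCard k, ∑ x ∈ E, A (insert a U) x)
              = ((n:ℝ))⁻¹ * (((n:ℝ) - ((k+1 : ℕ) : ℝ)) *
                (∑ U ∈ S₀.powersetCard k, ∑ x ∈ E, A (insert a U) x)) := by
                field_simp
            _ ≤ ((n:ℝ))⁻¹ * (Real.exp ε * (((k+1 : ℕ) : ℝ) *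
                ∑ T ∈ S₀.powersetCard (k+1), ∑ x ∈ E, A T x)) := h
            _ = Real.exp ε * (((k+1 : ℕ) : ℝ)/(n:ℝ)) *
                (∑ T ∈ S₀.powersetCard (k+1), ∑ x ∈ E, A T x) := by
                field_simp
  · -- numeric bound
    have h1 : Real.log (1 + (m / n : ℝ) * (Real.exp ε - 1))
        ≤ (m / n : ℝ) * (Real.exp ε - 1) := by
      have := Real.log_le_sub_one_of_pos hfac
      linarith
    have h2 : Real.exp ε - 1 ≤ ε * Real.exp ε := by
      have ha := Real.add_one_le_exp (-ε)
      have hb : Real.exp (-ε) * Real.exp ε = 1 := by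
        rw [← Real.exp_add]; simp
      nlinarith [Real.exp_pos ε]
    calc Real.log (1 + (m / n : ℝ) * (Real.exp ε - 1))
        ≤ (m / n : ℝ) * (Real.exp ε - 1) := h1
      _ ≤ (m / n : ℝ) * (ε * Real.exp ε) := by
          apply mul_le_mul_of_nonneg_left h2 hq0
      _ = (m / n : ℝ) * ε * Real.exp ε := by ring
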